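/- (Saint-Venant rigidity for quadratic symmetrized gradients; 'Q₃ = 0 implies 𝒜″ = 0' from the proof of Corollary 5.2.) Let m ≥ 1 and let S = (S_{ikjl})_{i,k,j,l=1..m} be a 4-tensor of real numbers with the curvature symmetries (antisymmetric in the first pair (i,k), antisymmetric in the second pair (j,l), symmetric under exchange of the two pairs, and satisfying the first Bianchi identity). Suppose there exists a twice continuously differentiable map b : B₁(0) ⊂ ℝ^m → ℝ^m such that for all i, j ∈ {1,…,m} and all x ∈ B₁(0): (1/2)(∂_{x_j} b_i(x) + ∂_{x_i} b_j(x)) = (1/6) Σ_{k,l=1}^m S_{ikjl} x_k x_l. Then S = 0. -/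

import Mathlib

open Set

noncomputable section

/-- A 4-tensor has the curvature symmetries (antisymmetric in the first pair of
indices, antisymmetric in the second pair, symmetric under exchange of the two
pairs, and satisfying the first Bianchi identity). -/
def CurvSymm {N : ℕ} (A : Fin N → Fin N → Fin N → Fin N → ℝ) : Prop :=
  (∀ i j k l, A i j k l = - A j i k l) ∧
  (∀ i j k l, A i j k l = - A i j l k) ∧
  (∀ i j k l, A i j k l = A k l i j) ∧
  (∀ i j k l, A i j k l + A i k l j + A i l j k = 0)

private lemma aux_ext {m : ℕ} {F : Type*} [NormedAddCommGroup F] [NormedSpace ℝ F]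
    {T U : EuclideanSpace ℝ (Fin m) →L[ℝ] F}
    (h : ∀ p, T (EuclideanSpace.single p 1) = U (EuclideanSpace.single p 1)) : T = U := by
  apply ContinuousLinearMap.coe_injective
  apply Module.Basis.ext (PiLp.basisFun 2 ℝ (Fin m))
  intro p
  rw [PiLp.basisFun_apply]
  exact h p

private lemma aux_hasFDeriv {m : ℕ} (c : Fin m → Fin m → ℝ) (x : EuclideanSpace ℝ (Fin m)) :
    HasFDerivAt (fun y : EuclideanSpace ℝ (Fin m) => (1/6:ℝ) * ∑ k, ∑ l, c k l * y k * y l)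
      ((1/6:ℝ) • ∑ k, ∑ l, ((c k l * x k) • (EuclideanSpace.proj l : EuclideanSpace ℝ (Fin m) →L[ℝ] ℝ)
        + x l • (c k l • (EuclideanSpace.proj k : EuclideanSpace ℝ (Fin m) →L[ℝ] ℝ)))) x := by
  apply HasFDerivAt.const_mul
  apply HasFDerivAt.fun_sum
  intro k _
  apply HasFDerivAt.fun_sum
  intro l _
  exact ((EuclideanSpace.proj k : EuclideanSpace ℝ (Fin m) →L[ℝ] ℝ).hasFDerivAt.const_mul
    (c k l)).mul (EuclideanSpace.proj l : EuclideanSpace ℝ (Fin m) →L[ℝ] ℝ).hasFDerivAt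

private lemma aux_eval {m : ℕ} (c : Fin m → Fin m → ℝ) (x : EuclideanSpace ℝ (Fin m)) (p : Fin m) :
    ((1/6:ℝ) • ∑ k, ∑ l, ((c k l * x k) • (EuclideanSpace.proj l : EuclideanSpace ℝ (Fin m) →L[ℝ] ℝ)
        + x l • (c k l • (EuclideanSpace.proj k : EuclideanSpace ℝ (Fin m) →L[ℝ] ℝ))))
      (EuclideanSpace.single p 1)
    = (1/6:ℝ) * ∑ l, (c p l + c l p) * x l := by
  simp only [ContinuousLinearMap.smul_apply, ContinuousLinearMap.sum_apply,
    ContinuousLinearMap.add_apply, PiLp.proj_apply, EuclideanSpace.single_apply,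
    smul_eq_mul, mul_ite, mul_one, mul_zero, ite_mul, zero_mul, Finset.sum_add_distrib]
  rw [Finset.sum_comm (γ := Fin m) (f := fun k l => if k = p then x l * c k l else 0)]
  simp only [Finset.sum_ite_eq', Finset.mem_univ, if_true]
  rw [← Finset.sum_add_distrib, Finset.mul_sum, Finset.mul_sum]
  apply Finset.sum_congr rfl
  intro l _
  ring

theorem saint_venant_rigidity (m : ℕ) (hm : 1 ≤ m)
    (S : Fin m → Fin m → Fin m → Fin m → ℝ) (hS : CurvSymm S)
    (b : EuclideanSpace ℝ (Fin m) → Fin m → ℝ)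
    (hb : ContDiffOn ℝ 2 b (Metric.ball 0 1))
    (hsymgrad : ∀ i j : Fin m, ∀ x ∈ Metric.ball (0 : EuclideanSpace ℝ (Fin m)) 1,
      (1/2) * (fderiv ℝ (fun z => b z i) x (EuclideanSpace.single j 1)
          + fderiv ℝ (fun z => b z j) x (EuclideanSpace.single i 1))
        = (1/6) * ∑ k, ∑ l, S i k j l * x k * x l) :
    ∀ i k j l : Fin m, S i k j l = 0 := by
  classical
  obtain ⟨hA1, hA2, hA3, hA4⟩ := hS
  have hBo : IsOpen (Metric.ball (0 : EuclideanSpace ℝ (Fin m)) 1) := Metric.isOpen_ball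
  have h0B : (0 : EuclideanSpace ℝ (Fin m)) ∈ Metric.ball (0 : EuclideanSpace ℝ (Fin m)) 1 := by
    simp
  -- components are C²
  have hf : ∀ i : Fin m, ContDiffOn ℝ 2 (fun z => b z i) (Metric.ball 0 1) := fun i =>
    (ContinuousLinearMap.proj (R := ℝ) (φ := fun _ : Fin m => ℝ) i).contDiff.comp_contDiffOn hb
  have hdf1 : ∀ i : Fin m, ContDiffOn ℝ 1 (fderiv ℝ (fun z => b z i)) (Metric.ball 0 1) :=
    fun i => (hf i).fderiv_of_isOpen hBo (by norm_num)
  have hdaf : ∀ (i : Fin m), ∀ x ∈ Metric.ball (0 : EuclideanSpace ℝ (Fin m)) 1,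
      DifferentiableAt ℝ (fderiv ℝ (fun z => b z i)) x := fun i x hx =>
    ((hdf1 i x hx).contDiffAt (hBo.mem_nhds hx)).differentiableAt one_ne_zero
  -- Schwarz symmetry for second derivatives of components
  have hsymm : ∀ (i : Fin m), ∀ x ∈ Metric.ball (0 : EuclideanSpace ℝ (Fin m)) 1,
      ∀ v w, fderiv ℝ (fderiv ℝ (fun z => b z i)) x v w
        = fderiv ℝ (fderiv ℝ (fun z => b z i)) x w v := fun i x hx =>
    ((hf i x hx).contDiffAt (hBo.mem_nhds hx)).isSymmSndFDerivAt minSmoothness_of_isRCLikeNormedField.le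
  -- the partial derivative functions
  have hgdiff : ∀ (i k : Fin m), ∀ x ∈ Metric.ball (0 : EuclideanSpace ℝ (Fin m)) 1,
      DifferentiableAt ℝ (fun y => fderiv ℝ (fun z => b z i) y (EuclideanSpace.single k 1)) x :=
    fun i k x hx => (hdaf i x hx).clm_apply (differentiableAt_const _)
  have hgfd : ∀ (i k : Fin m), ∀ x ∈ Metric.ball (0 : EuclideanSpace ℝ (Fin m)) 1,
      fderiv ℝ (fun y => fderiv ℝ (fun z => b z i) y (EuclideanSpace.single k 1)) x
        = (fderiv ℝ (fderiv ℝ (fun z => b z i)) x).flip (EuclideanSpace.single k 1) := by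
    intro i k x hx
    rw [fderiv_clm_apply (hdaf i x hx) (differentiableAt_const (EuclideanSpace.single k 1))]
    simp
  -- differentiate the hypothesis
  have hkey : ∀ (i j p : Fin m), ∀ x ∈ Metric.ball (0 : EuclideanSpace ℝ (Fin m)) 1,
      (1/2) * (fderiv ℝ (fderiv ℝ (fun z => b z i)) x (EuclideanSpace.single p 1) (EuclideanSpace.single j 1)
             + fderiv ℝ (fderiv ℝ (fun z => b z j)) x (EuclideanSpace.single p 1) (EuclideanSpace.single i 1))
      = (1/6) * ∑ l, (S i p j l + S i l j p) * x l := by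
    intro i j p x hx
    have hev : (fun y => (1/2:ℝ) * (fderiv ℝ (fun z => b z i) y (EuclideanSpace.single j 1)
          + fderiv ℝ (fun z => b z j) y (EuclideanSpace.single i 1)))
        =ᶠ[nhds x] (fun y => (1/6:ℝ) * ∑ k, ∑ l, S i k j l * y k * y l) := by
      filter_upwards [hBo.mem_nhds hx] with y hy using hsymgrad i j y hy
    have h1 := hev.fderiv_eq (𝕜 := ℝ)
    have dL1 := hgdiff i j x hx
    have dL2 := hgdiff j i x hx
    have hL : fderiv ℝ (fun y => (1/2:ℝ) * (fderiv ℝ (fun z => b z i) y (EuclideanSpace.single j 1)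
          + fderiv ℝ (fun z => b z j) y (EuclideanSpace.single i 1))) x
        = (1/2:ℝ) • (fderiv ℝ (fun y => fderiv ℝ (fun z => b z i) y (EuclideanSpace.single j 1)) x
          + fderiv ℝ (fun y => fderiv ℝ (fun z => b z j) y (EuclideanSpace.single i 1)) x) := by
      rw [fderiv_const_mul (dL1.fun_add dL2) ((1:ℝ)/2), fderiv_fun_add dL1 dL2]
    calc (1/2) * (fderiv ℝ (fderiv ℝ (fun z => b z i)) x (EuclideanSpace.single p 1) (EuclideanSpace.single j 1)
             + fderiv ℝ (fderiv ℝ (fun z => b z j)) x (EuclideanSpace.single p 1) (EuclideanSpace.single i 1))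
        = fderiv ℝ (fun y => (1/2:ℝ) * (fderiv ℝ (fun z => b z i) y (EuclideanSpace.single j 1)
            + fderiv ℝ (fun z => b z j) y (EuclideanSpace.single i 1))) x (EuclideanSpace.single p 1) := by
          rw [hL]
          simp [hgfd i j x hx, hgfd j i x hx]
          ring
      _ = fderiv ℝ (fun y => (1/6:ℝ) * ∑ k, ∑ l, S i k j l * y k * y l) x (EuclideanSpace.single p 1) := by
          rw [h1]
      _ = (1/6) * ∑ l, (S i p j l + S i l j p) * x l := by
          rw [(aux_hasFDeriv (fun k l => S i k j l) x).fderiv]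
          exact aux_eval (fun k l => S i k j l) x p
  -- the explicit second derivative
  have hGval : ∀ (i k j : Fin m), ∀ x ∈ Metric.ball (0 : EuclideanSpace ℝ (Fin m)) 1,
      fderiv ℝ (fderiv ℝ (fun z => b z i)) x (EuclideanSpace.single j 1) (EuclideanSpace.single k 1)
        = ∑ l, ((1/3) * (S i j k l + S i k j l)) * x l := by
    intro i k j x hx
    have e1 := hkey i k j x hx
    have e2 := hkey i j k x hx
    have e3 := hkey j k i x hx
    have si := hsymm i x hx (EuclideanSpace.single k 1) (EuclideanSpace.single j 1)
    have sj := hsymm j x hx (EuclideanSpace.single k 1) (EuclideanSpace.single i 1)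
    have sk := hsymm k x hx (EuclideanSpace.single i 1) (EuclideanSpace.single j 1)
    have hc : fderiv ℝ (fderiv ℝ (fun z => b z i)) x (EuclideanSpace.single j 1) (EuclideanSpace.single k 1)
        = (1/6) * ∑ l, (S i j k l + S i l k j) * x l + (1/6) * ∑ l, (S i k j l + S i l j k) * x l
          - (1/6) * ∑ l, (S j i k l + S j l k i) * x l := by
      linarith [e1, e2, e3, si, sj, sk]
    rw [hc, Finset.mul_sum, Finset.mul_sum, Finset.mul_sum, ← Finset.sum_add_distrib,
      ← Finset.sum_sub_distrib]
    refine Finset.sum_congr rfl fun l _ => ?_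
    have r1 := hA1 j i k l
    have r2 : S j l k i = - S i k j l := by rw [hA3 j l k i, hA1 k i j l]
    have r3 := hA2 i l j k
    rw [r1, r2, r3]
    ring
  -- now fix i, k and study the third derivative
  intro i k j l
  set A : EuclideanSpace ℝ (Fin m) →L[ℝ] (EuclideanSpace ℝ (Fin m) →L[ℝ] ℝ) :=
    ∑ j' : Fin m, ∑ l' : Fin m, ((1/3) * (S i j' k l' + S i k j' l')) •
      ((EuclideanSpace.proj l' : EuclideanSpace ℝ (Fin m) →L[ℝ] ℝ).smulRight
        (EuclideanSpace.proj j' : EuclideanSpace ℝ (Fin m) →L[ℝ] ℝ)) with hAdef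
  have hAval : ∀ (y : EuclideanSpace ℝ (Fin m)) (p : Fin m),
      A y (EuclideanSpace.single p 1) = ∑ l', ((1/3) * (S i p k l' + S i k p l')) * y l' := by
    intro y p
    simp only [hAdef, ContinuousLinearMap.sum_apply, ContinuousLinearMap.smul_apply,
      ContinuousLinearMap.smulRight_apply, PiLp.proj_apply, EuclideanSpace.single_apply,
      smul_eq_mul, mul_ite, mul_one, mul_zero, Finset.sum_ite_irrel, Finset.sum_const_zero,
      Finset.sum_ite_eq', Finset.mem_univ, if_true]
  have hAg : ∀ x ∈ Metric.ball (0 : EuclideanSpace ℝ (Fin m)) 1,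
      fderiv ℝ (fun y => fderiv ℝ (fun z => b z i) y (EuclideanSpace.single k 1)) x = A x := by
    intro x hx
    apply aux_ext
    intro p
    rw [hgfd i k x hx, ContinuousLinearMap.flip_apply, hGval i k p x hx, hAval x p]
  have hg2 : ContDiffOn ℝ 2 (fun y => fderiv ℝ (fun z => b z i) y (EuclideanSpace.single k 1))
      (Metric.ball 0 1) := by
    have h21 : (2 : WithTop ℕ∞) = 1 + 1 := by norm_num
    rw [h21, contDiffOn_succ_iff_fderiv_of_isOpen hBo]
    refine ⟨fun x hx => (hgdiff i k x hx).differentiableWithinAt, by simp, ?_⟩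
    exact (A.contDiff.contDiffOn).congr fun x hx => hAg x hx
  have hgat : ContDiffAt ℝ 2 (fun y => fderiv ℝ (fun z => b z i) y (EuclideanSpace.single k 1)) 0 :=
    (hg2 0 h0B).contDiffAt (hBo.mem_nhds h0B)
  have hsymm2 := hgat.isSymmSndFDerivAt minSmoothness_of_isRCLikeNormedField.le
  have hAd : fderiv ℝ (fderiv ℝ (fun y => fderiv ℝ (fun z => b z i) y (EuclideanSpace.single k 1))) 0 = A := by
    have hev : fderiv ℝ (fun y => fderiv ℝ (fun z => b z i) y (EuclideanSpace.single k 1)) =ᶠ[nhds 0] ⇑A := by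
      filter_upwards [hBo.mem_nhds h0B] with y hy using hAg y hy
    rw [hev.fderiv_eq, A.fderiv]
  have hstar := hsymm2 (EuclideanSpace.single j 1) (EuclideanSpace.single l 1)
  rw [hAd] at hstar
  have hAee : ∀ p q : Fin m, A (EuclideanSpace.single q 1) (EuclideanSpace.single p 1)
      = (1/3) * (S i p k q + S i k p q) := by
    intro p q
    rw [hAval (EuclideanSpace.single q 1) p]
    simp [EuclideanSpace.single_apply, mul_ite, mul_one, mul_zero, Finset.sum_ite_eq',
      Finset.mem_univ, if_true]
  rw [hAee l j, hAee j l] at hstar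
  -- hstar : (1/3)*(S i l k j + S i k l j) = (1/3)*(S i j k l + S i k j l)
  have h4 := hA4 i j k l
  have h2a := hA2 i k j l
  have h2b := hA2 i l j k
  linarith
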